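/- Conversion from pure DP to zCDP: If a randomized algorithm M satisfies ε-differential privacy, then M satisfies ρ-zCDP with ρ = ε²/2. -/

import Mathlib

open Real

/-- Databases are multisets; neighbors differ by adding or removing one element. -/
def Neighbor {D : Type*} (X X' : Multiset D) : Prop :=
  (∃ x, X' = x ::ₘ X) ∨ (∃ x, X = x ::ₘ X')

/-- `ε`-differential privacy for a randomized algorithm with discrete output. -/
def IsPureDP {D Y : Type*} (M : Multiset D → PMF Y) (ε : ℝ) : Prop :=
  ∀ X X', Neighbor X X' → ∀ S : Set Y,
    (M X).toOuterMeasure S ≤ ENNReal.ofReal (Real.exp ε) * (M X').toOuterMeasure S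

/-- The `α`-Rényi divergence between two discrete distributions. -/
noncomputable def renyiDiv {Y : Type*} (P Q : PMF Y) (α : ℝ) : ℝ :=
  (α - 1)⁻¹ * Real.log (∑' y, (P y).toReal ^ α * (Q y).toReal ^ (1 - α))

/-- `ρ`-zero-concentrated differential privacy. -/
def IszCDP {D Y : Type*} (M : Multiset D → PMF Y) (ρ : ℝ) : Prop :=
  ∀ X X', Neighbor X X' → ∀ α : ℝ, 1 < α → renyiDiv (M X) (M X') α ≤ ρ * α

lemma sinh_le_mul_cosh {x : ℝ} (hx : 0 ≤ x) : Real.sinh x ≤ x * Real.cosh x := by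
  have hmono : MonotoneOn (fun x : ℝ => x * Real.cosh x - Real.sinh x) (Set.Ici 0) := by
    apply monotoneOn_of_deriv_nonneg (convex_Ici 0)
    · exact ((continuous_id.mul Real.continuous_cosh).sub Real.continuous_sinh).continuousOn
    · intro y hy
      exact (((hasDerivAt_id y).mul (Real.hasDerivAt_cosh y)).sub
        (Real.hasDerivAt_sinh y)).differentiableAt.differentiableWithinAt
    · intro y hy
      rw [interior_Ici, Set.mem_Ioi] at hy
      have h := (((hasDerivAt_id y).mul (Real.hasDerivAt_cosh y)).sub (Real.hasDerivAt_sinh y)).deriv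
      simp only [id] at h; rw [show (fun x : ℝ => x * Real.cosh x - Real.sinh x) = id * Real.cosh - Real.sinh from rfl, h]
      have : 0 ≤ Real.sinh y := Real.sinh_nonneg_iff.2 hy.le
      nlinarith [Real.cosh_pos y]
  have := hmono (Set.self_mem_Ici) hx hx
  simp at this
  linarith

lemma cosh_ratio {t s : ℝ} (ht : 0 ≤ t) (hs : 1 ≤ s) :
    Real.cosh (s * t) ≤ Real.cosh t * Real.exp ((s ^ 2 - 1) * t ^ 2 / 2) := by
  set F : ℝ → ℝ := fun s => (s ^ 2 - 1) * t ^ 2 / 2 + Real.log (Real.cosh t)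
    - Real.log (Real.cosh (s * t)) with hF
  have hd : ∀ y : ℝ, HasDerivAt F (y * t ^ 2 - (Real.cosh (y*t))⁻¹ * (Real.sinh (y*t) * t)) y := by
    intro y
    have h1 : HasDerivAt (fun s : ℝ => s * t) t y := by simpa using (hasDerivAt_id y).mul_const t
    have h2 : HasDerivAt (fun s : ℝ => Real.cosh (s * t)) (Real.sinh (y*t) * t) y :=
      by have := (Real.hasDerivAt_cosh (y*t)).comp y h1; exact this
    have h3 : HasDerivAt (fun s : ℝ => Real.log (Real.cosh (s * t)))
        ((Real.cosh (y*t))⁻¹ * (Real.sinh (y*t) * t)) y :=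
      by have := (Real.hasDerivAt_log (Real.cosh_pos (y*t)).ne').comp y h2; exact this
    have h4 : HasDerivAt (fun s : ℝ => (s ^ 2 - 1) * t ^ 2 / 2 + Real.log (Real.cosh t))
        (y * t ^ 2) y := by
      have : HasDerivAt (fun s : ℝ => (s ^ 2 - 1) * t ^ 2 / 2 + Real.log (Real.cosh t))
          ((2 * y ^ 1 * t ^ 2 / 2)) y := by
        apply HasDerivAt.add_const
        exact (((hasDerivAt_pow 2 y).sub_const 1).mul_const (t^2)).div_const 2
      convert this using 1; ring
    exact h4.sub h3
  have hmono : MonotoneOn F (Set.Ici 0) := by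
    apply monotoneOn_of_deriv_nonneg (convex_Ici 0)
    · have : Continuous F := by
        rw [hF]
        fun_prop (disch := intro s; exact (Real.cosh_pos (s*t)).ne')
      exact this.continuousOn
    · exact fun y _ => (hd y).differentiableAt.differentiableWithinAt
    · intro y hy
      rw [interior_Ici, Set.mem_Ioi] at hy
      rw [(hd y).deriv]
      have hyt : 0 ≤ y * t := mul_nonneg hy.le ht
      have h5 : Real.sinh (y*t) ≤ (y*t) * Real.cosh (y*t) := sinh_le_mul_cosh hyt
      have hc : 0 < Real.cosh (y*t) := Real.cosh_pos (y*t)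
      rw [sub_nonneg, inv_mul_le_iff₀ hc]
      nlinarith
  have key : F 1 ≤ F s := hmono (by norm_num) (by exact le_trans zero_le_one hs) hs
  have hF1 : F 1 = 0 := by simp [hF]
  rw [hF1, hF] at key
  simp only [sub_nonneg] at key
  have hc : 0 < Real.cosh (s*t) := Real.cosh_pos (s*t)
  have hc2 : 0 < Real.cosh t * Real.exp ((s ^ 2 - 1) * t ^ 2 / 2) :=
    mul_pos (Real.cosh_pos t) (Real.exp_pos _)
  rw [← Real.log_le_log_iff hc hc2]
  rw [Real.log_mul (Real.cosh_pos t).ne' (Real.exp_pos _).ne', Real.log_exp]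
  linarith

lemma chord_bound {α a b r : ℝ} (hα : 1 ≤ α) (ha : 0 ≤ a) (hab : a < b) (h1 : a ≤ r)
    (h2 : r ≤ b) : r ^ α ≤ ((b ^ α - a ^ α) / (b - a)) * r + (a ^ α * b - b ^ α * a) / (b - a) := by
  have hba : 0 < b - a := sub_pos.2 hab
  set θ : ℝ := (r - a) / (b - a) with hθ
  have hθ0 : 0 ≤ θ := div_nonneg (by linarith) hba.le
  have hθ1 : θ ≤ 1 := (div_le_one hba).2 (by linarith)
  have hconv := (convexOn_rpow hα).2 (Set.mem_Ici.2 ha) (Set.mem_Ici.2 (ha.trans (le_of_lt hab)))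
    (by linarith : (0:ℝ) ≤ 1 - θ) hθ0 (by ring)
  have hr : (1 - θ) • a + θ • b = r := by
    simp only [smul_eq_mul]
    rw [hθ]; field_simp
    ring
  rw [hr] at hconv
  simp only [smul_eq_mul] at hconv
  calc r ^ α ≤ (1 - θ) * a ^ α + θ * b ^ α := hconv
    _ = ((b ^ α - a ^ α) / (b - a)) * r + (a ^ α * b - b ^ α * a) / (b - a) := by
        rw [hθ]; field_simp; ring

lemma chordsum_le {ε α : ℝ} (hε : 0 < ε) (hα : 1 < α) :
    (Real.exp ε ^ α - Real.exp (-ε) ^ α) / (Real.exp ε - Real.exp (-ε))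
      + (Real.exp (-ε) ^ α * Real.exp ε - Real.exp ε ^ α * Real.exp (-ε))
        / (Real.exp ε - Real.exp (-ε))
      ≤ Real.exp (α * (α - 1) * ε ^ 2 / 2) := by
  have hD : 0 < Real.exp ε - Real.exp (-ε) := by
    have := Real.exp_lt_exp.2 (show -ε < ε by linarith)
    linarith
  have H := cosh_ratio (t := ε/2) (s := 2*α - 1) (by linarith) (by linarith)
  have hexp : ((2*α-1) ^ 2 - 1) * (ε/2) ^ 2 / 2 = α * (α - 1) * ε ^ 2 / 2 := by ring
  rw [hexp, Real.cosh_eq, Real.cosh_eq] at H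
  set E := Real.exp (α * (α - 1) * ε ^ 2 / 2) with hE
  rw [← add_div, div_le_iff₀ hD]
  rw [← Real.exp_mul, ← Real.exp_mul]
  have e1 : Real.exp (ε * α) = Real.exp ((2*α-1) * (ε/2)) * Real.exp (ε/2) := by
    rw [← Real.exp_add]; ring_nf
  have e2 : Real.exp (-ε * α) = Real.exp (-((2*α-1) * (ε/2))) * Real.exp (-(ε/2)) := by
    rw [← Real.exp_add]; ring_nf
  have e3 : Real.exp ε = Real.exp (ε/2) * Real.exp (ε/2) := by rw [← Real.exp_add]; ring_nf
  have e4 : Real.exp (-ε) = Real.exp (-(ε/2)) * Real.exp (-(ε/2)) := by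
    rw [← Real.exp_add]; ring_nf
  set X := Real.exp ((2*α-1) * (ε/2))
  set Xi := Real.exp (-((2*α-1) * (ε/2)))
  set P := Real.exp (ε/2)
  set Pi := Real.exp (-(ε/2))
  have hPQ : Pi < P := Real.exp_lt_exp.2 (by linarith)
  have hPi : 0 < Pi := Real.exp_pos _
  have hXXi : X * Xi = 1 := by rw [← Real.exp_add]; simp
  have hPPi : P * Pi = 1 := by rw [← Real.exp_add]; simp
  rw [e1, e2, e3, e4]
  have hXs : X + Xi ≤ (P + Pi) * E := by linarith
  have key : (X + Xi) * (P - Pi) ≤ (P + Pi) * E * (P - Pi) :=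
    mul_le_mul_of_nonneg_right hXs (by linarith)
  have r1 : Xi * Pi * (P * P) = Xi * P := by
    rw [show Xi * Pi * (P * P) = (P * Pi) * (Xi * P) from by ring, hPPi, one_mul]
  have r2 : X * P * (Pi * Pi) = X * Pi := by
    rw [show X * P * (Pi * Pi) = (P * Pi) * (X * Pi) from by ring, hPPi, one_mul]
  nlinarith [key, r1, r2]

lemma tsum_bound {Y : Type*} {p q : Y → ℝ} {ε α : ℝ} (hε : 0 < ε) (hα : 1 < α)
    (hp : ∀ y, 0 ≤ p y) (hq : ∀ y, 0 ≤ q y)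
    (hpq : ∀ y, p y ≤ Real.exp ε * q y) (hqp : ∀ y, q y ≤ Real.exp ε * p y)
    (hsp : Summable p) (hsq : Summable q) (htp : ∑' y, p y = 1) (htq : ∑' y, q y = 1) :
    ∑' y, p y ^ α * q y ^ (1 - α) ≤ Real.exp (α * (α - 1) * ε ^ 2 / 2) := by
  set a := Real.exp (-ε) with ha
  set b := Real.exp ε with hb
  have hab : a < b := Real.exp_lt_exp.2 (by linarith)
  have ha0 : 0 < a := Real.exp_pos _
  have hinv : a * b = 1 := by rw [ha, hb, ← Real.exp_add]; simp
  set A := (b ^ α - a ^ α) / (b - a) with hA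
  set B := (a ^ α * b - b ^ α * a) / (b - a) with hB
  have hpt : ∀ y, p y ^ α * q y ^ (1 - α) ≤ A * p y + B * q y := by
    intro y
    rcases eq_or_lt_of_le (hq y) with hq0 | hq0
    · have hp0 : p y = 0 :=
        le_antisymm (by have h := hpq y; rw [← hq0, mul_zero] at h; exact h) (hp y)
      rw [hp0, ← hq0, Real.zero_rpow (by positivity), Real.zero_rpow (by linarith)]
      simp
    · set r := p y / q y with hr
      have hr1 : a ≤ r := by
        rw [hr, le_div_iff₀ hq0]
        have := hqp y
        nlinarith
      have hr2 : r ≤ b := by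
        rw [hr, div_le_iff₀ hq0]
        have := hpq y
        linarith
      have hch := chord_bound hα.le ha0.le hab hr1 hr2
      have hLHS : p y ^ α * q y ^ (1 - α) = r ^ α * q y := by
        rw [hr, Real.div_rpow (hp y) hq0.le, Real.rpow_sub hq0, Real.rpow_one]
        field_simp
      have hrq : r * q y = p y := div_mul_cancel₀ _ hq0.ne'
      rw [hLHS]
      calc r ^ α * q y ≤ (A * r + B) * q y := by
            apply mul_le_mul_of_nonneg_right _ hq0.le
            rw [hA, hB]; linarith [hch]
        _ = A * p y + B * q y := by rw [← hrq]; ring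
  have hsAB : Summable (fun y => A * p y + B * q y) := (hsp.mul_left A).add (hsq.mul_left B)
  have hsL : Summable (fun y => p y ^ α * q y ^ (1 - α)) := by
    apply Summable.of_nonneg_of_le _ hpt hsAB
    intro y
    exact mul_nonneg (Real.rpow_nonneg (hp y) _) (Real.rpow_nonneg (hq y) _)
  calc ∑' y, p y ^ α * q y ^ (1 - α) ≤ ∑' y, (A * p y + B * q y) := Summable.tsum_le_tsum hpt hsL hsAB
    _ = A + B := by
        rw [Summable.tsum_add (hsp.mul_left A) (hsq.mul_left B), tsum_mul_left, tsum_mul_left, htp, htq,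
          mul_one, mul_one]
    _ ≤ Real.exp (α * (α - 1) * ε ^ 2 / 2) := chordsum_le hε hα

lemma pointwiseDP {D Y : Type*} {M : Multiset D → PMF Y} {ε : ℝ} (hDP : IsPureDP M ε)
    {X X' : Multiset D} (hN : Neighbor X X') (y : Y) :
    ((M X) y).toReal ≤ Real.exp ε * ((M X') y).toReal := by
  have h := hDP X X' hN {y}
  rw [PMF.toOuterMeasure_apply_singleton, PMF.toOuterMeasure_apply_singleton] at h
  have hfin : ENNReal.ofReal (Real.exp ε) * (M X') y ≠ ⊤ :=
    ENNReal.mul_ne_top ENNReal.ofReal_ne_top (PMF.apply_ne_top _ _)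
  have := ENNReal.toReal_mono hfin h
  rwa [ENNReal.toReal_mul, ENNReal.toReal_ofReal (Real.exp_pos ε).le] at this

/-- Conversion from pure DP to zCDP: an `ε`-DP algorithm is `(ε²/2)`-zCDP. -/
theorem pureDP_to_zCDP {D Y : Type*} (M : Multiset D → PMF Y) (ε : ℝ) (hε : 0 ≤ ε)
    (hDP : IsPureDP M ε) : IszCDP M (ε ^ 2 / 2) := by
  intro X X' hN α hα
  have hN' : Neighbor X' X := by
    rcases hN with ⟨x, h⟩ | ⟨x, h⟩
    exacts [Or.inr ⟨x, h⟩, Or.inl ⟨x, h⟩]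
  set p : Y → ℝ := fun y => ((M X) y).toReal with hpdef
  set q : Y → ℝ := fun y => ((M X') y).toReal with hqdef
  have hp : ∀ y, 0 ≤ p y := fun y => ENNReal.toReal_nonneg
  have hq : ∀ y, 0 ≤ q y := fun y => ENNReal.toReal_nonneg
  have hpq : ∀ y, p y ≤ Real.exp ε * q y := fun y => pointwiseDP hDP hN y
  have hqp : ∀ y, q y ≤ Real.exp ε * p y := fun y => pointwiseDP hDP hN' y
  have hsp : Summable p := ENNReal.summable_toReal (by rw [PMF.tsum_coe]; exact ENNReal.one_ne_top)
  have hsq : Summable q := ENNReal.summable_toReal (by rw [PMF.tsum_coe]; exact ENNReal.one_ne_top)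
  have htp : ∑' y, p y = 1 := by
    rw [hpdef, ← ENNReal.tsum_toReal_eq (fun a => PMF.apply_ne_top (M X) a), PMF.tsum_coe,
      ENNReal.toReal_one]
  have htq : ∑' y, q y = 1 := by
    rw [hqdef, ← ENNReal.tsum_toReal_eq (fun a => PMF.apply_ne_top (M X') a), PMF.tsum_coe,
      ENNReal.toReal_one]
  have hα1 : (0:ℝ) < α - 1 := by linarith
  rcases eq_or_lt_of_le hε with hε0 | hε0
  · -- ε = 0 : the two distributions agree
    have hpq' : ∀ y, p y = q y := by
      intro y
      have h1 := hpq y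
      have h2 := hqp y
      rw [← hε0, Real.exp_zero, one_mul] at h1 h2
      linarith
    have hterm : ∀ y, p y ^ α * q y ^ (1 - α) = p y := by
      intro y
      rw [← hpq' y]
      rcases eq_or_lt_of_le (hp y) with h0 | h0
      · rw [← h0, Real.zero_rpow (by positivity), zero_mul]
      · rw [← Real.rpow_add h0]
        norm_num
    show (α - 1)⁻¹ * Real.log (∑' y, p y ^ α * q y ^ (1 - α)) ≤ ε ^ 2 / 2 * α
    rw [tsum_congr hterm, htp, Real.log_one, mul_zero, ← hε0]
    positivity
  · have key := tsum_bound hε0 hα hp hq hpq hqp hsp hsq htp htq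
    show (α - 1)⁻¹ * Real.log (∑' y, p y ^ α * q y ^ (1 - α)) ≤ ε ^ 2 / 2 * α
    set S := ∑' y, p y ^ α * q y ^ (1 - α) with hS
    have hS0 : 0 ≤ S :=
      tsum_nonneg fun y => mul_nonneg (Real.rpow_nonneg (hp y) _) (Real.rpow_nonneg (hq y) _)
    rcases eq_or_lt_of_le hS0 with h0 | h0
    · rw [← h0, Real.log_zero, mul_zero]
      positivity
    · have hlog : Real.log S ≤ α * (α - 1) * ε ^ 2 / 2 := by
        calc Real.log S ≤ Real.log (Real.exp (α * (α - 1) * ε ^ 2 / 2)) :=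
              Real.log_le_log h0 key
          _ = α * (α - 1) * ε ^ 2 / 2 := Real.log_exp _
      have := mul_le_mul_of_nonneg_left hlog (inv_nonneg.2 hα1.le)
      calc (α - 1)⁻¹ * Real.log S ≤ (α - 1)⁻¹ * (α * (α - 1) * ε ^ 2 / 2) := this
        _ = ε ^ 2 / 2 * α := by field_simp
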